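/- Let X be a first-countable Hausdorff space and suppose g_i is a sequence of homeomorphisms of X converging pointwise to a bijection f such that: for every z ≠ x there is N with f agreeing with g_N on a neighbourhood of z avoiding a basis element U_N, and f maps each basis neighbourhood U_N of x onto an open neighbourhood V_N of y = f(x). Then f is an open map, and hence (applying the same to f⁻¹) a homeomorphism. -/

import Mathlib

open Filter Topology Set

variable {X : Type*} [TopologicalSpace X]

/-- The group structure on self-homeomorphisms of `X`, with `(f * g) x = f (g x)`. -/
instance Homeomorph.instGroupSelf : Group (X ≃ₜ X) where
  mul f g := g.trans f
  one := Homeomorph.refl X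
  inv := Homeomorph.symm
  mul_assoc _ _ _ := rfl
  one_mul _ := Homeomorph.ext fun _ => rfl
  mul_one _ := Homeomorph.ext fun _ => rfl
  inv_mul_cancel f := Homeomorph.ext fun x => f.symm_apply_apply x

/-- The orbit of `x` under a group `G` of homeomorphisms of `X`. -/
def orbitSet (G : Subgroup (X ≃ₜ X)) (x : X) : Set X := {z | ∃ g ∈ G, g x = z}

/-- The action of `G` on `X` is minimal: every orbit is dense. -/
def IsMinimalAction (G : Subgroup (X ≃ₜ X)) : Prop := ∀ x : X, Dense (orbitSet G x)

/-- A set `S` of homeomorphisms acts minimally on `U`: for every `y ∈ U`, the intersection of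
the `S`-orbit of `y` with `U` is dense in `U`. -/
def MinimalOn (S : Set (X ≃ₜ X)) (U : Set X) : Prop :=
  ∀ y ∈ U, U ⊆ closure ({z | ∃ g ∈ S, g y = z} ∩ U)

/-- A set `S` of homeomorphisms acts locally minimally on `U`: every point of `U` has an open
neighbourhood `W ⊆ U` in which the intersection of every `S`-orbit with `W` is dense. -/
def LocallyMinimalOn (S : Set (X ≃ₜ X)) (U : Set X) : Prop :=
  ∀ x ∈ U, ∃ W ⊆ U, IsOpen W ∧ x ∈ W ∧ MinimalOn S W

/-- The rigid stabiliser of `U` in `G`: elements of `G` fixing `X \ U` pointwise. -/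
def rist (G : Subgroup (X ≃ₜ X)) (U : Set X) : Set (X ≃ₜ X) :=
  {g | g ∈ G ∧ ∀ z ∉ U, g z = z}

/-- The neighbourhood stabiliser of `x` in `G`, as a set: elements of `G` fixing pointwise
some open neighbourhood of `x`. -/
def nbhdStab (G : Subgroup (X ≃ₜ X)) (x : X) : Set (X ≃ₜ X) :=
  {g | g ∈ G ∧ ∃ U : Set X, IsOpen U ∧ x ∈ U ∧ ∀ z ∈ U, g z = z}

/-- The stabiliser of `x` in `G`, as a subgroup of the homeomorphism group. -/
def stabSub (G : Subgroup (X ≃ₜ X)) (x : X) : Subgroup (X ≃ₜ X) where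
  carrier := {g | g ∈ G ∧ g x = x}
  one_mem' := ⟨G.one_mem, rfl⟩
  mul_mem' := by
    rintro a b ⟨haG, ha⟩ ⟨hbG, hb⟩
    exact ⟨G.mul_mem haG hbG, by show a (b x) = x; rw [hb, ha]⟩
  inv_mem' := by
    rintro a ⟨haG, ha⟩
    refine ⟨G.inv_mem haG, ?_⟩
    show a.symm x = x
    conv_lhs => rw [← ha]
    exact a.symm_apply_apply x

/-- The neighbourhood stabiliser of `x` in `G`, as a subgroup of the homeomorphism group. -/
def nbhdStabSub (G : Subgroup (X ≃ₜ X)) (x : X) : Subgroup (X ≃ₜ X) where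
  carrier := nbhdStab G x
  one_mem' := ⟨G.one_mem, Set.univ, isOpen_univ, trivial, fun _ _ => rfl⟩
  mul_mem' := by
    rintro a b ⟨haG, U, hU, hxU, ha⟩ ⟨hbG, V, hV, hxV, hb⟩
    refine ⟨G.mul_mem haG hbG, U ∩ V, hU.inter hV, ⟨hxU, hxV⟩, fun z hz => ?_⟩
    show a (b z) = z
    rw [hb z hz.2, ha z hz.1]
  inv_mem' := by
    rintro a ⟨haG, U, hU, hxU, ha⟩
    refine ⟨G.inv_mem haG, U, hU, hxU, fun z hz => ?_⟩
    show a.symm z = z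
    conv_lhs => rw [← ha z hz]
    exact a.symm_apply_apply z

theorem pointwise_limit_isOpenMap [FirstCountableTopology X] [T2Space X]
    (x y : X) (U V : ℕ → Set X) (g : ℕ → X ≃ₜ X) (f : X → X)
    (hbij : Function.Bijective f) (hfx : f x = y)
    (hUopen : ∀ i, IsOpen (U i)) (hxU : ∀ i, x ∈ U i)
    (hUdec : ∀ i, U (i + 1) ⊆ U i) (hUbasis : ∀ S ∈ 𝓝 x, ∃ i, U i ⊆ S)
    (hVopen : ∀ i, IsOpen (V i)) (hyV : ∀ i, y ∈ V i)
    (hVdec : ∀ i, V (i + 1) ⊆ V i) (hVbasis : ∀ S ∈ 𝓝 y, ∃ i, V i ⊆ S)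
    (hconv : ∀ z : X, Tendsto (fun i => g i z) atTop (𝓝 (f z)))
    (hagree : ∀ N, ∀ z ∉ U N, f z = g N z)
    (himg : ∀ N, f '' U N = V N) :
    IsOpenMap f := by
  intro W hW
  rw [isOpen_iff_mem_nhds]
  rintro v ⟨w, hwW, rfl⟩
  by_cases hwx : w = x
  · subst hwx
    obtain ⟨i, hi⟩ := hUbasis W (hW.mem_nhds hwW)
    have hsub : V i ⊆ f '' W := by rw [← himg i]; exact Set.image_mono (f := f) hi
    have hfw : f w ∈ V i := by rw [hfx]; exact hyV i
    exact Filter.mem_of_superset ((hVopen i).mem_nhds hfw) hsub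
  · obtain ⟨A, B, hA, hB, hxA, hwB, hAB⟩ := t2_separation (Ne.symm hwx)
    obtain ⟨i, hi⟩ := hUbasis A (hA.mem_nhds hxA)
    have hdisj : ∀ z ∈ B, z ∉ U i := fun z hz hzU =>
      Set.disjoint_left.mp hAB (hi hzU) hz
    have hopen : IsOpen ((g i) '' (B ∩ W)) := (g i).isOpenMap _ (hB.inter hW)
    have hfw : f w ∈ (g i) '' (B ∩ W) := by
      rw [hagree i w (hdisj w hwB)]
      exact ⟨w, ⟨hwB, hwW⟩, rfl⟩
    have hsub : (g i) '' (B ∩ W) ⊆ f '' W := by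
      rintro _ ⟨z, ⟨hzB, hzW⟩, rfl⟩
      exact ⟨z, hzW, hagree i z (hdisj z hzB)⟩
    exact Filter.mem_of_superset (hopen.mem_nhds hfw) hsub
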